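/- Let F ∈ S_t(ℝ[x]) be a symmetric matrix polynomial of degree d such that F(x) is positive definite for all x ∈ [0,1]. Then there exist a positive integer N and positive definite matrices G_i ∈ M_t(ℝ), i = 0, …, N+d, such that F(x) = Σ_{i=0}^{N+d} G_i x^i (1-x)^{N+d-i}. -/

import Mathlib

open Polynomial Finset Matrix

lemma aux_abs_prod_sub_prod (k : ℕ) (a b : ℕ → ℝ)
    (ha : ∀ j < k, 0 ≤ a j ∧ a j ≤ 1) (hb : ∀ j < k, 0 ≤ b j ∧ b j ≤ 1) :
    |∏ j ∈ range k, a j - ∏ j ∈ range k, b j| ≤ ∑ j ∈ range k, |a j - b j| := by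
  induction k with
  | zero => simp
  | succ k ih =>
    have ha' : ∀ j < k, 0 ≤ a j ∧ a j ≤ 1 := fun j hj => ha j (hj.trans (Nat.lt_succ_self k))
    have hb' : ∀ j < k, 0 ≤ b j ∧ b j ≤ 1 := fun j hj => hb j (hj.trans (Nat.lt_succ_self k))
    rw [prod_range_succ, prod_range_succ, sum_range_succ]
    have hpa : 0 ≤ ∏ j ∈ range k, a j := prod_nonneg (fun j hj => (ha' j (mem_range.mp hj)).1)
    have hpa1 : ∏ j ∈ range k, a j ≤ 1 :=
      prod_le_one (fun j hj => (ha' j (mem_range.mp hj)).1) (fun j hj => (ha' j (mem_range.mp hj)).2)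
    have hbk := hb k (Nat.lt_succ_self k)
    calc |(∏ j ∈ range k, a j) * a k - (∏ j ∈ range k, b j) * b k|
        = |(∏ j ∈ range k, a j) * (a k - b k) + ((∏ j ∈ range k, a j) - ∏ j ∈ range k, b j) * b k| := by
          ring_nf
      _ ≤ |(∏ j ∈ range k, a j) * (a k - b k)| + |((∏ j ∈ range k, a j) - ∏ j ∈ range k, b j) * b k| :=
          abs_add_le _ _
      _ ≤ 1 * |a k - b k| + (∑ j ∈ range k, |a j - b j|) * 1 := by
          rw [abs_mul, abs_mul]
          have h1 : |∏ j ∈ range k, a j| ≤ 1 := by rw [abs_of_nonneg hpa]; exact hpa1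
          have h2 : |b k| ≤ 1 := by rw [abs_of_nonneg hbk.1]; exact hbk.2
          have h3 := ih ha' hb'
          have := mul_le_mul_of_nonneg_right h1 (abs_nonneg (a k - b k))
          have := mul_le_mul h3 h2 (abs_nonneg _) (sum_nonneg fun j _ => abs_nonneg _)
          linarith
      _ = (∑ j ∈ range k, |a j - b j|) + |a k - b k| := by ring

lemma aux_choose_prod (n i k : ℕ) (hk : k ≤ i) (hi : i ≤ n) (hkn : k ≤ n) :
    (n.choose i : ℝ) * ∏ j ∈ range k, (((i : ℝ) - j) / ((n : ℝ) - j)) =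
      ((n - k).choose (i - k) : ℝ) := by
  induction k with
  | zero => simp
  | succ k ih =>
    have hki : k ≤ i := Nat.le_of_succ_le hk
    have hknn : k ≤ n := Nat.le_of_succ_le hkn
    have hkltn : k < n := hkn
    have hklti : k < i := hk
    rw [prod_range_succ, ← mul_assoc, ih hki hknn]
    have hnk : ((n : ℝ) - k) ≠ 0 := by
      have : (k : ℝ) < n := by exact_mod_cast hkltn
      linarith
    have key : ((n - k).choose (i - k) : ℝ) * ((i : ℝ) - k) =
        ((n - (k+1)).choose (i - (k+1)) : ℝ) * ((n : ℝ) - k) := by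
      have h1 : (n - k) * (n - k - 1).choose (i - k - 1) = (n-k).choose (i-k) * (i - k) := by
        have := Nat.add_one_mul_choose_eq (n - k - 1) (i - k - 1)
        have e1 : n - k - 1 + 1 = n - k := by omega
        have e2 : i - k - 1 + 1 = i - k := by omega
        rw [e1, e2] at this
        linarith [this]
      have c1 : ((i : ℝ) - k) = ((i - k : ℕ) : ℝ) := by
        push_cast [Nat.cast_sub hki]; ring
      have c2 : ((n : ℝ) - k) = ((n - k : ℕ) : ℝ) := by
        push_cast [Nat.cast_sub hknn]; ring
      have e3 : n - (k+1) = n - k - 1 := by omega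
      have e4 : i - (k+1) = i - k - 1 := by omega
      rw [c1, c2, e3, e4]
      exact_mod_cast (h1.symm.trans (Nat.mul_comm _ _))
    field_simp
    linarith [key]

lemma aux_dot {t : ℕ} (M : Matrix (Fin t) (Fin t) ℝ) (v : Fin t → ℝ) :
    star v ⬝ᵥ M *ᵥ v = ∑ p, ∑ q, v p * M p q * v q := by
  simp [dotProduct, mulVec, Finset.mul_sum, mul_assoc]

lemma aux_eps {t : ℕ} [Nonempty (Fin t)] (F : Matrix (Fin t) (Fin t) (Polynomial ℝ))
    (hpos : ∀ x ∈ Set.Icc (0 : ℝ) 1, (F.map (Polynomial.eval x)).PosDef) :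
    ∃ ε > 0, ∀ x ∈ Set.Icc (0:ℝ) 1, ∀ v : Fin t → ℝ, ‖v‖ = 1 →
      ε ≤ ∑ p, ∑ q, v p * (F p q).eval x * v q := by
  set f : ℝ × (Fin t → ℝ) → ℝ := fun z => ∑ p, ∑ q, z.2 p * (F p q).eval z.1 * z.2 q with hfdef
  have hf : Continuous f := by
    apply continuous_finset_sum; intro p _; apply continuous_finset_sum; intro q _
    exact (((continuous_apply p).comp continuous_snd).mul
      ((F p q).continuous.comp continuous_fst)).mul ((continuous_apply q).comp continuous_snd)
  have hcpt : IsCompact ((Set.Icc (0:ℝ) 1) ×ˢ Metric.sphere (0 : Fin t → ℝ) 1) :=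
    isCompact_Icc.prod (isCompact_sphere _ _)
  have hne : ((Set.Icc (0:ℝ) 1) ×ˢ Metric.sphere (0 : Fin t → ℝ) 1).Nonempty := by
    refine ⟨(0, fun _ => 1), ?_, ?_⟩
    · exact Set.mem_Icc.mpr ⟨le_refl _, zero_le_one⟩
    · simp [mem_sphere_iff_norm]
  obtain ⟨z₀, hz₀, hmin⟩ := hcpt.exists_isMinOn hne hf.continuousOn
  have hx₀ : z₀.1 ∈ Set.Icc (0:ℝ) 1 := (Set.mem_prod.mp hz₀).1
  have hv₀ : ‖z₀.2‖ = 1 := by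
    have := (Set.mem_prod.mp hz₀).2
    simpa [mem_sphere_iff_norm] using this
  have hv₀ne : z₀.2 ≠ 0 := by
    intro h; rw [h] at hv₀; simp at hv₀
  have hεpos : 0 < f z₀ := by
    have hpd := (hpos z₀.1 hx₀).dotProduct_mulVec_pos hv₀ne
    have : star z₀.2 ⬝ᵥ (F.map (Polynomial.eval z₀.1)) *ᵥ z₀.2
        = ∑ p, ∑ q, z₀.2 p * (F p q).eval z₀.1 * z₀.2 q := by
      rw [aux_dot]; simp [Matrix.map_apply]
    rw [this] at hpd
    exact hpd
  refine ⟨f z₀, hεpos, fun x hx v hv => ?_⟩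
  have hmem : (x, v) ∈ (Set.Icc (0:ℝ) 1) ×ˢ Metric.sphere (0 : Fin t → ℝ) 1 :=
    Set.mem_prod.mpr ⟨hx, by simp [mem_sphere_iff_norm, hv]⟩
  exact hmin hmem

lemma aux_swap3 {t : ℕ} (g : Fin t → Fin t → ℕ → ℝ) (s : Finset ℕ) :
    ∑ p : Fin t, ∑ q : Fin t, (∑ k ∈ s, g p q k) = ∑ k ∈ s, ∑ p : Fin t, ∑ q : Fin t, g p q k := by
  have h1 : ∀ p : Fin t, ∑ q : Fin t, ∑ k ∈ s, g p q k = ∑ k ∈ s, ∑ q : Fin t, g p q k :=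
    fun p => Finset.sum_comm
  simp_rw [h1]
  exact Finset.sum_comm

lemma aux_eval_expand {t : ℕ} (d : ℕ) (F : Matrix (Fin t) (Fin t) (Polynomial ℝ))
    (hdegle : ∀ i j, (F i j).natDegree ≤ d) (v : Fin t → ℝ) (x : ℝ) :
    ∑ p, ∑ q, v p * (F p q).eval x * v q
      = ∑ k ∈ range (d+1), (∑ p, ∑ q, v p * (F p q).coeff k * v q) * x ^ k := by
  have he : ∀ p q : Fin t, (F p q).eval x = ∑ k ∈ range (d+1), (F p q).coeff k * x ^ k :=
    fun p q => eval_eq_sum_range' (Nat.lt_succ_of_le (hdegle p q)) x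
  calc ∑ p, ∑ q, v p * (F p q).eval x * v q
      = ∑ p, ∑ q, ∑ k ∈ range (d+1), v p * (F p q).coeff k * v q * x ^ k := by
        refine sum_congr rfl fun p _ => sum_congr rfl fun q _ => ?_
        rw [he p q, Finset.mul_sum, Finset.sum_mul]
        exact sum_congr rfl fun k _ => by ring
    _ = ∑ k ∈ range (d+1), ∑ p, ∑ q, v p * (F p q).coeff k * v q * x ^ k :=
        aux_swap3 (fun p q k => v p * (F p q).coeff k * v q * x ^ k) _
    _ = ∑ k ∈ range (d+1), (∑ p, ∑ q, v p * (F p q).coeff k * v q) * x ^ k := by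
        refine sum_congr rfl fun k _ => ?_
        rw [Finset.sum_mul]
        exact sum_congr rfl fun p _ => by rw [Finset.sum_mul]

lemma aux_G_expand {t : ℕ} (d : ℕ) (F : Matrix (Fin t) (Fin t) (Polynomial ℝ))
    (w : ℕ → ℝ) (v : Fin t → ℝ) :
    ∑ p, ∑ q, v p * (∑ k ∈ range (d+1), w k * (F p q).coeff k) * v q
      = ∑ k ∈ range (d+1), w k * (∑ p, ∑ q, v p * (F p q).coeff k * v q) := by
  calc ∑ p, ∑ q, v p * (∑ k ∈ range (d+1), w k * (F p q).coeff k) * v q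
      = ∑ p, ∑ q, ∑ k ∈ range (d+1), w k * (v p * (F p q).coeff k * v q) := by
        refine sum_congr rfl fun p _ => sum_congr rfl fun q _ => ?_
        rw [Finset.mul_sum, Finset.sum_mul]
        exact sum_congr rfl fun k _ => by ring
    _ = ∑ k ∈ range (d+1), ∑ p, ∑ q, w k * (v p * (F p q).coeff k * v q) :=
        aux_swap3 _ _
    _ = ∑ k ∈ range (d+1), w k * (∑ p, ∑ q, v p * (F p q).coeff k * v q) := by
        refine sum_congr rfl fun k _ => ?_
        rw [Finset.mul_sum]
        exact sum_congr rfl fun p _ => by rw [Finset.mul_sum]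

lemma aux_wt (n i k : ℕ) (hi : i ≤ n) (hkn : k ≤ n) :
    (if k ≤ i then (((n-k).choose (i-k) : ℕ) : ℝ) else 0)
      = (n.choose i : ℝ) * ∏ j ∈ range k, (((i : ℝ) - j) / ((n : ℝ) - j)) := by
  split_ifs with h
  · exact (aux_choose_prod n i k h hi hkn).symm
  · push_neg at h
    rw [Finset.prod_eq_zero (Finset.mem_range.mpr h) (by simp), mul_zero]

lemma aux_ratio_err (N d n i k : ℕ) (hn : n = N + d) (hN : 0 < N) (hk : k ≤ d) (hi : i ≤ n) :
    |(∏ j ∈ range k, (((i : ℝ) - j) / ((n : ℝ) - j))) - ((i : ℝ) / n) ^ k|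
      ≤ (d * d : ℝ) / N := by
  have hn0 : 0 < n := by omega
  have hnR : (0:ℝ) < n := by exact_mod_cast hn0
  have hNR : (0:ℝ) < N := by exact_mod_cast hN
  by_cases hki : k ≤ i
  · -- use product difference bound
    set a : ℕ → ℝ := fun j => ((i : ℝ) - j) / ((n : ℝ) - j) with ha
    set b : ℕ → ℝ := fun j => (i : ℝ) / n with hb
    have hfacts : ∀ j < k, ((0:ℝ) ≤ a j ∧ a j ≤ 1) ∧ (0 ≤ b j ∧ b j ≤ 1) ∧ |a j - b j| ≤ (d:ℝ)/N := by
      intro j hj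
      have hjk : j < k := hj
      have hjd : (j:ℝ) ≤ d := by exact_mod_cast Nat.le_of_lt_succ (by omega : j < d + 1)
      have hji : (j:ℝ) < i := by exact_mod_cast (lt_of_lt_of_le hjk hki)
      have hjn : (j:ℝ) < n := by
        have : j < n := by omega
        exact_mod_cast this
      have hNnj : (N:ℝ) ≤ (n:ℝ) - j := by
        have : (j:ℝ) ≤ (d:ℝ) := hjd
        have hnd : (n:ℝ) = N + d := by exact_mod_cast hn
        linarith
      have hiRn : (i:ℝ) ≤ n := by exact_mod_cast hi
      have hnj0 : (0:ℝ) < (n:ℝ) - j := by linarith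
      constructor
      · constructor
        · apply div_nonneg <;> linarith
        · rw [div_le_one hnj0]; linarith
      constructor
      · constructor
        · positivity
        · rw [div_le_one hnR]; linarith
      · have heq : a j - b j = -((j:ℝ) * ((n:ℝ) - i)) / (((n:ℝ) - j) * n) := by
          simp only [ha, hb]
          rw [div_sub_div _ _ hnj0.ne' hnR.ne']
          congr 1
          ring
        have hd0 : (0:ℝ) < ((n:ℝ) - j) * n := mul_pos hnj0 hnR
        have hj0 : (0:ℝ) ≤ j := Nat.cast_nonneg j
        have hni : (n:ℝ) - i ≤ n := by linarith [Nat.cast_nonneg (α := ℝ) i]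
        have hnum : (0:ℝ) ≤ (j:ℝ) * ((n:ℝ) - i) := mul_nonneg hj0 (by linarith)
        rw [heq, abs_div, abs_neg]
        rw [abs_of_nonneg hnum, abs_of_nonneg hd0.le]
        rw [div_le_div_iff₀ hd0 hNR]
        have hjdN : (j:ℝ) * N ≤ d * ((n:ℝ) - j) := by nlinarith
        have s1 : (j:ℝ) * ((n:ℝ) - i) * N ≤ (j:ℝ) * N * n := by
          nlinarith [mul_le_mul_of_nonneg_left hni (mul_nonneg hj0 hNR.le)]
        have s2 : (j:ℝ) * N * n ≤ (d * ((n:ℝ) - j)) * n :=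
          mul_le_mul_of_nonneg_right hjdN hnR.le
        nlinarith
    have hbp : ((i:ℝ)/n)^k = ∏ j ∈ range k, b j := by simp [hb, div_pow]
    rw [hbp]
    calc |(∏ j ∈ range k, a j) - ∏ j ∈ range k, b j|
        ≤ ∑ j ∈ range k, |a j - b j| := by
          apply aux_abs_prod_sub_prod k a b
          · exact fun j hj => (hfacts j hj).1
          · exact fun j hj => (hfacts j hj).2.1
      _ ≤ ∑ j ∈ range k, (d:ℝ)/N := by
          apply Finset.sum_le_sum
          intro j hj
          exact (hfacts j (Finset.mem_range.mp hj)).2.2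
      _ = k * ((d:ℝ)/N) := by rw [Finset.sum_const, Finset.card_range]; simp
      _ ≤ (d*d:ℝ)/N := by
          have hkd : (k:ℝ) ≤ d := by exact_mod_cast hk
          have hdN : (0:ℝ) ≤ (d:ℝ)/N := by positivity
          calc (k:ℝ) * ((d:ℝ)/N) ≤ (d:ℝ) * ((d:ℝ)/N) :=
                mul_le_mul_of_nonneg_right hkd hdN
            _ = (d*d:ℝ)/N := by ring
  · -- i < k : product is zero
    push_neg at hki
    rw [Finset.prod_eq_zero (Finset.mem_range.mpr hki) (by simp), zero_sub, abs_neg, abs_pow]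
    have hk1 : 1 ≤ k := by omega
    have hd1 : 1 ≤ d := by omega
    have hin : (0:ℝ) ≤ (i:ℝ)/n := by positivity
    have hin1 : (i:ℝ)/n ≤ 1 := by rw [div_le_one hnR]; exact_mod_cast hi
    have h1 : |(i:ℝ)/n| ^ k ≤ |(i:ℝ)/n| := by
      apply pow_le_of_le_one (abs_nonneg _) _ (by omega : k ≠ 0)
      rw [abs_of_nonneg hin]; exact hin1
    have h2 : (i:ℝ)/n ≤ (d*d:ℝ)/N := by
      apply div_le_div₀ (by positivity) _ hNR _
      · have : (i:ℝ) ≤ d := by exact_mod_cast (by omega : i ≤ d)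
        nlinarith [ (by exact_mod_cast hd1 : (1:ℝ) ≤ d) ]
      · exact_mod_cast (by omega : N ≤ n)
    calc |(i:ℝ)/n| ^ k ≤ |(i:ℝ)/n| := h1
      _ = (i:ℝ)/n := abs_of_nonneg hin
      _ ≤ _ := h2

lemma aux_bern_expand (d n : ℕ) (p : Polynomial ℝ) (hp : p.natDegree ≤ d) (hdn : d ≤ n) :
    p = ∑ i ∈ range (n+1), (X ^ i * (1 - X) ^ (n - i) : Polynomial ℝ) *
        C (∑ k ∈ range (d+1), (if k ≤ i then (((n-k).choose (i-k) : ℕ) : ℝ) else 0) * p.coeff k) := by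
  have step : ∀ i ∈ range (n+1),
      (X ^ i * (1 - X) ^ (n - i) : Polynomial ℝ) *
        C (∑ k ∈ range (d+1), (if k ≤ i then (((n-k).choose (i-k) : ℕ) : ℝ) else 0) * p.coeff k)
      = ∑ k ∈ range (d+1), (if k ≤ i then
          ((((n-k).choose (i-k) : ℕ) : Polynomial ℝ) * C (p.coeff k) * (X ^ i * (1 - X) ^ (n - i))) else 0) := by
    intro i _
    rw [map_sum, mul_sum]
    refine sum_congr rfl fun k _ => ?_
    split_ifs with h
    · rw [C_mul, map_natCast]; ring
    · simp
  rw [sum_congr rfl step, sum_comm]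
  have inner : ∀ k ∈ range (d+1),
      (∑ i ∈ range (n+1), if k ≤ i then
          ((((n-k).choose (i-k) : ℕ) : Polynomial ℝ) * C (p.coeff k) * (X ^ i * (1 - X) ^ (n - i))) else 0)
      = C (p.coeff k) * X ^ k := by
    intro k hk
    have hkd : k ≤ d := Nat.lt_succ_iff.mp (mem_range.mp hk)
    have hkn : k ≤ n := hkd.trans hdn
    have hfil : (range (n+1)).filter (fun i => k ≤ i) = Ico k (n+1) := by
      ext a; simp [Nat.lt_succ_iff, mem_Ico]; omega
    rw [← sum_filter, hfil, sum_Ico_eq_sum_range]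
    have hnk1 : n + 1 - k = (n - k) + 1 := by omega
    rw [hnk1]
    have term : ∀ m ∈ range ((n-k)+1),
        ((((n - k).choose ((k+m) - k) : ℕ) : Polynomial ℝ) * C (p.coeff k) *
          (X ^ (k+m) * (1 - X) ^ (n - (k+m))))
        = C (p.coeff k) * X ^ k * (X ^ m * (1 - X) ^ ((n-k) - m) * (((n-k).choose m : ℕ) : Polynomial ℝ)) := by
      intro m hm
      have hm' : m ≤ n - k := Nat.lt_succ_iff.mp (mem_range.mp hm)
      have e1 : (k+m) - k = m := by omega
      have e2 : n - (k+m) = (n-k) - m := by omega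
      rw [e1, e2, pow_add]
      ring
    rw [sum_congr rfl term, ← mul_sum, ← add_pow (X : Polynomial ℝ) (1 - X) (n-k)]
    simp
  rw [sum_congr rfl inner]
  conv_lhs => rw [p.as_sum_range' (d+1) (Nat.lt_succ_of_le hp)]
  refine sum_congr rfl fun k _ => ?_
  rw [← C_mul_X_pow_eq_monomial]

lemma aux_coeff_bound {t : ℕ} (a : Fin t → Fin t → ℝ) (v : Fin t → ℝ) (hv : ‖v‖ = 1) :
    |∑ p, ∑ q, v p * a p q * v q| ≤ ∑ p, ∑ q, |a p q| := by
  have hvle : ∀ p, |v p| ≤ 1 := by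
    intro p
    have := norm_le_pi_norm v p
    rwa [hv, Real.norm_eq_abs] at this
  calc |∑ p, ∑ q, v p * a p q * v q| ≤ ∑ p, |∑ q, v p * a p q * v q| :=
        Finset.abs_sum_le_sum_abs _ _
    _ ≤ ∑ p, ∑ q, |v p * a p q * v q| :=
        Finset.sum_le_sum fun p _ => Finset.abs_sum_le_sum_abs _ _
    _ ≤ ∑ p, ∑ q, |a p q| := by
        refine Finset.sum_le_sum fun p _ => Finset.sum_le_sum fun q _ => ?_
        rw [abs_mul, abs_mul]
        calc |v p| * |a p q| * |v q| ≤ 1 * |a p q| * 1 := by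
              apply mul_le_mul (mul_le_mul (hvle p) le_rfl (abs_nonneg _) zero_le_one)
                (hvle q) (abs_nonneg _) (by positivity)
          _ = |a p q| := by ring

/-- Bernstein-type representation on `[0,1]`: if the symmetric matrix
polynomial `F` has degree `d` and `F(x) ≻ 0` on `[0,1]`, then
`F = Σ_{i=0}^{N+d} Gᵢ xⁱ (1-x)^{N+d-i}` with all `Gᵢ` positive definite. -/
theorem posDef_on_unit_interval_rep (t d : ℕ)
    (F : Matrix (Fin t) (Fin t) (Polynomial ℝ)) (hsymm : F.IsSymm)
    (hdegle : ∀ i j, (F i j).natDegree ≤ d)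
    (hdeg : ∃ i j, (F i j).coeff d ≠ 0)
    (hpos : ∀ x ∈ Set.Icc (0 : ℝ) 1, (F.map (Polynomial.eval x)).PosDef) :
    ∃ N : ℕ, 0 < N ∧ ∃ G : ℕ → Matrix (Fin t) (Fin t) ℝ,
      (∀ i ∈ Finset.range (N + d + 1), (G i).PosDef) ∧
      F = ∑ i ∈ Finset.range (N + d + 1),
        ((Polynomial.X ^ i * (1 - Polynomial.X) ^ (N + d - i) : Polynomial ℝ)) •
          (G i).map Polynomial.C := by
  obtain ⟨p₀, q₀, -⟩ := hdeg
  haveI : Nonempty (Fin t) := ⟨p₀⟩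
  obtain ⟨ε, hε, hεle⟩ := aux_eps F hpos
  have hFsymm : ∀ p q, F q p = F p q := fun p q => congrFun (congrFun hsymm p) q
  set M : ℝ := ∑ k ∈ Finset.range (d+1), ∑ p, ∑ q, |(F p q).coeff k| with hMdef
  have hM0 : 0 ≤ M :=
    Finset.sum_nonneg fun k _ => Finset.sum_nonneg fun p _ =>
      Finset.sum_nonneg fun q _ => abs_nonneg _
  set N : ℕ := ⌈(d*d*M)/ε⌉₊ + 1 with hNdef
  have hNpos : 0 < N := Nat.succ_pos _
  have hNR : (0:ℝ) < N := by exact_mod_cast hNpos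
  have hNε : ((d*d:ℝ)/N)*M < ε := by
    have hx : (d*d*M)/ε < N := by
      have h1 := Nat.le_ceil ((d*d*M)/ε)
      have h2' : ⌈(d*d*M)/ε⌉₊ < N := hNdef ▸ Nat.lt_succ_self _
      have h2 : (⌈(d*d*M)/ε⌉₊ : ℝ) < N := Nat.cast_lt.mpr h2'
      linarith
    have h3 : (d*d*M : ℝ) < N * ε := (div_lt_iff₀ hε).mp hx
    rw [div_mul_eq_mul_div, div_lt_iff₀ hNR]
    linarith
  set n : ℕ := N + d with hndef
  have hnR : (0:ℝ) < n := by positivity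
  -- the coefficient quadratic forms and weights
  set c : (Fin t → ℝ) → ℕ → ℝ := fun v k => ∑ p, ∑ q, v p * (F p q).coeff k * v q with hcdef
  set wt : ℕ → ℕ → ℝ := fun i k => if k ≤ i then (((n-k).choose (i-k) : ℕ) : ℝ) else 0 with hwtdef
  refine ⟨N, hNpos, fun i => Matrix.of fun p q => ∑ k ∈ range (d+1), wt i k * (F p q).coeff k,
    ?_, ?_⟩
  · -- positive definiteness
    intro i hi
    have hin : i ≤ n := by
      have := Finset.mem_range.mp hi; omega
    refine Matrix.PosDef.of_dotProduct_mulVec_pos ?_ ?_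
    · -- Hermitian
      ext p q
      simp only [conjTranspose_apply, Matrix.of_apply, star_trivial]
      exact Finset.sum_congr rfl fun k _ => by rw [hFsymm p q]
    · intro v hv
      have hvn : ‖v‖ ≠ 0 := norm_ne_zero_iff.mpr hv
      have hvpos : (0:ℝ) < ‖v‖ := lt_of_le_of_ne (norm_nonneg v) (Ne.symm hvn)
      set u : Fin t → ℝ := ‖v‖⁻¹ • v with hudef
      have hu : ‖u‖ = 1 := by
        rw [hudef, norm_smul, norm_inv, norm_norm, inv_mul_cancel₀ hvn]
      have hvu : ∀ p, v p = ‖v‖ * u p := by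
        intro p
        simp [hudef]
        field_simp
      -- unit vector case
      have hunit : 0 < ∑ p, ∑ q, u p * (∑ k ∈ range (d+1), wt i k * (F p q).coeff k) * u q := by
        rw [aux_G_expand d F (wt i) u]
        have hwteq : ∀ k ∈ range (d+1), wt i k * c u k
            = (n.choose i : ℝ) * ((∏ j ∈ range k, (((i : ℝ) - j) / ((n : ℝ) - j))) * c u k) := by
          intro k hk
          have hkn : k ≤ n := by have := Finset.mem_range.mp hk; omega
          rw [hwtdef]
          simp only
          rw [aux_wt n i k hin hkn, mul_assoc]
        rw [Finset.sum_congr rfl hwteq, ← Finset.mul_sum]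
        have hchpos : (0:ℝ) < (n.choose i : ℝ) := by
          exact_mod_cast Nat.choose_pos hin
        apply mul_pos hchpos
        -- core estimate
        have hx : (i:ℝ)/n ∈ Set.Icc (0:ℝ) 1 := by
          constructor
          · positivity
          · rw [div_le_one hnR]; exact_mod_cast hin
        have hA : ε ≤ ∑ k ∈ range (d+1), c u k * ((i:ℝ)/n) ^ k := by
          rw [← aux_eval_expand d F hdegle u ((i:ℝ)/n)]
          exact hεle _ hx u hu
        have hB : |∑ k ∈ range (d+1),
            ((∏ j ∈ range k, (((i : ℝ) - j) / ((n : ℝ) - j))) - ((i:ℝ)/n) ^ k) * c u k|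
            ≤ ((d*d:ℝ)/N) * M := by
          calc |∑ k ∈ range (d+1),
              ((∏ j ∈ range k, (((i : ℝ) - j) / ((n : ℝ) - j))) - ((i:ℝ)/n) ^ k) * c u k|
              ≤ ∑ k ∈ range (d+1),
                |((∏ j ∈ range k, (((i : ℝ) - j) / ((n : ℝ) - j))) - ((i:ℝ)/n) ^ k)| * |c u k| := by
                refine (Finset.abs_sum_le_sum_abs _ _).trans ?_
                refine Finset.sum_le_sum fun k _ => ?_
                rw [abs_mul]
            _ ≤ ∑ k ∈ range (d+1), ((d*d:ℝ)/N) * (∑ p, ∑ q, |(F p q).coeff k|) := by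
                refine Finset.sum_le_sum fun k hk => ?_
                have hkd : k ≤ d := by have := Finset.mem_range.mp hk; omega
                apply mul_le_mul (aux_ratio_err N d n i k hndef hNpos hkd hin)
                  (aux_coeff_bound _ u hu) (abs_nonneg _) (by positivity)
            _ = ((d*d:ℝ)/N) * M := by rw [← Finset.mul_sum, hMdef]
        have hsplit : ∑ k ∈ range (d+1),
            (∏ j ∈ range k, (((i : ℝ) - j) / ((n : ℝ) - j))) * c u k
            = (∑ k ∈ range (d+1), c u k * ((i:ℝ)/n) ^ k)
              + ∑ k ∈ range (d+1),
                ((∏ j ∈ range k, (((i : ℝ) - j) / ((n : ℝ) - j))) - ((i:ℝ)/n) ^ k) * c u k := by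
          rw [← Finset.sum_add_distrib]
          exact Finset.sum_congr rfl fun k _ => by ring
        rw [hsplit]
        have := abs_le.mp hB
        linarith [this.1]
      -- scale back to v
      have hscale : star v ⬝ᵥ (Matrix.of fun p q =>
          ∑ k ∈ range (d+1), wt i k * (F p q).coeff k) *ᵥ v
          = ‖v‖^2 * ∑ p, ∑ q, u p * (∑ k ∈ range (d+1), wt i k * (F p q).coeff k) * u q := by
        rw [aux_dot]
        rw [Finset.mul_sum]
        refine Finset.sum_congr rfl fun p _ => ?_
        rw [Finset.mul_sum]
        refine Finset.sum_congr rfl fun q _ => ?_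
        rw [hvu p, hvu q]
        simp only [Matrix.of_apply]
        ring
      rw [hscale]
      exact mul_pos (by positivity) hunit
  · -- the representation identity
    refine Matrix.ext fun p q => ?_
    rw [Matrix.sum_apply]
    have hterm : ∀ i ∈ range (n+1),
        (((X ^ i * (1 - X) ^ (N + d - i) : Polynomial ℝ)) •
          ((Matrix.of fun p q => ∑ k ∈ range (d+1), wt i k * (F p q).coeff k).map C)) p q
        = (X ^ i * (1 - X) ^ (n - i) : Polynomial ℝ) *
            C (∑ k ∈ range (d+1), (if k ≤ i then (((n-k).choose (i-k) : ℕ) : ℝ) else 0) * (F p q).coeff k) := by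
      intro i _
      simp only [Matrix.smul_apply, Matrix.map_apply, Matrix.of_apply, smul_eq_mul, hwtdef]
      rfl
    rw [Finset.sum_congr rfl hterm]
    exact aux_bern_expand d n (F p q) (hdegle p q) (by omega)
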